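/- Let f : 2^N → ℝ be a non-negative submodular set function on a finite set N with extended multilinear extension F, let y ∈ [0,1]^(2^N), and let S, T ⊆ N be disjoint sets. Then F(y[S↦1][T↦1]) + F(y[S↦0][T↦0]) ≤ F(y[S↦1][T↦0]) + F(y[S↦0][T↦1]); that is, the mixed second-order difference of F in the coordinates indexed by S and T is non-positive. -/
import Mathlib


open scoped Classical

/-- A matroid on a finite ground set, given by its independent sets. -/
structure FinMatroid (α : Type*) [Fintype α] [DecidableEq α] where
  Indep : Finset α → Prop
  indep_empty : Indep ∅
  indep_subset : ∀ ⦃S T : Finset α⦄, Indep T → S ⊆ T → Indep S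
  indep_exchange : ∀ ⦃S T : Finset α⦄, Indep S → Indep T → S.card < T.card →
    ∃ u ∈ T \ S, Indep (insert u S)

variable {α : Type*} [Fintype α] [DecidableEq α]

/-- The rank of a set `A`: the maximum size of an independent subset of `A`. -/
noncomputable def FinMatroid.rank (M : FinMatroid α) (A : Finset α) : ℕ :=
  (A.powerset.filter fun S => M.Indep S).sup Finset.card

/-- A base of a matroid: an inclusion-wise maximal independent set. -/
def FinMatroid.IsBase (M : FinMatroid α) (B : Finset α) : Prop :=
  M.Indep B ∧ ∀ T : Finset α, M.Indep T → B ⊆ T → T = B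

/-- The extended multilinear extension of a set function `f`, evaluated at a
vector `y` with one coordinate for each subset of the ground set. -/
noncomputable def extMulti (f : Finset α → ℝ) (y : Finset α → ℝ) : ℝ :=
  ∑ J : Finset (Finset α), f (J.sup id) * ((∏ S ∈ J, y S) * ∏ S ∈ Jᶜ, (1 - y S))

/-- The standard multilinear extension of a set function `f`. -/
noncomputable def stdMulti (f : Finset α → ℝ) (x : α → ℝ) : ℝ :=
  ∑ S : Finset α, f S * ((∏ u ∈ S, x u) * ∏ u ∈ Sᶜ, (1 - x u))

/-- The marginal vector of `y`: `marg y u = 1 - ∏_{S ∋ u} (1 - y S)`. -/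
noncomputable def marg (y : Finset α → ℝ) (u : α) : ℝ :=
  1 - ∏ S ∈ Finset.univ.filter (fun S : Finset α => u ∈ S), (1 - y S)

/-- The characteristic vector of the coordinate indexed by the set `A`. -/
def chi (A : Finset α) : Finset α → ℝ := fun S => if S = A then 1 else 0

/-- The coordinate-wise probabilistic sum of two vectors. -/
def psum {ι : Type*} (a b : ι → ℝ) : ι → ℝ := fun i => 1 - (1 - a i) * (1 - b i)

/-- Membership of `x` in the matroid polytope `P(M)`. -/
def inMatroidPolytope (M : FinMatroid α) (x : α → ℝ) : Prop :=
  (∀ u, 0 ≤ x u) ∧ ∀ A : Finset α, ∑ u ∈ A, x u ≤ (M.rank A : ℝ)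


open Finset in
lemma extMulti_expand2 (f y : Finset α → ℝ) (S T : Finset α) (hST : S ≠ T) (a b : ℝ) :
    extMulti f (Function.update (Function.update y S a) T b) =
    ∑ J ∈ Finset.univ.filter (fun J : Finset (Finset α) => S ∉ J ∧ T ∉ J),
      (a * b * f ((insert S (insert T J)).sup id)
        + a * (1 - b) * f ((insert S J).sup id)
        + (1 - a) * b * f ((insert T J).sup id)
        + (1 - a) * (1 - b) * f (J.sup id))
       * ((∏ B ∈ J, y B) * ∏ B ∈ (Jᶜ.erase S).erase T, (1 - y B)) := by
  classical
  set z := Function.update (Function.update y S a) T b with hz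
  have hzS : z S = a := by rw [hz, Function.update_of_ne hST, Function.update_self]
  have hzT : z T = b := by rw [hz, Function.update_self]
  have hzB : ∀ B, B ≠ S → B ≠ T → z B = y B := by
    intro B h1 h2; rw [hz, Function.update_of_ne h2, Function.update_of_ne h1]
  clear_value z
  have h11 : ∑ J ∈ (Finset.univ.filter (fun J : Finset (Finset α) => S ∈ J)).filter
        (fun J => T ∈ J),
      f (J.sup id) * ((∏ B ∈ J, z B) * ∏ B ∈ Jᶜ, (1 - z B))
      = ∑ J ∈ Finset.univ.filter (fun J : Finset (Finset α) => S ∉ J ∧ T ∉ J),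
      a * b * f ((insert S (insert T J)).sup id) *
        ((∏ B ∈ J, y B) * ∏ B ∈ (Jᶜ.erase S).erase T, (1 - y B)) := by
    refine Finset.sum_nbij' (fun J => (J.erase S).erase T) (fun J => insert S (insert T J))
      ?_ ?_ ?_ ?_ ?_
    · intro J hJ
      simp [Finset.mem_erase, hST]
    · intro J hJ
      simp only [Finset.mem_filter, Finset.mem_univ, true_and] at hJ ⊢
      simp [Finset.mem_insert]
    · intro J hJ
      simp only [Finset.mem_filter, Finset.mem_univ, true_and] at hJ
      obtain ⟨hS, hT⟩ := hJ
      ext x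
      simp only [Finset.mem_insert, Finset.mem_erase]
      constructor
      · rintro (rfl | rfl | ⟨_, _, hx⟩) <;> tauto
      · intro hx
        by_cases h1 : x = S
        · tauto
        · by_cases h2 : x = T <;> tauto
    · intro J hJ
      simp only [Finset.mem_filter, Finset.mem_univ, true_and] at hJ
      obtain ⟨hS, hT⟩ := hJ
      ext x
      simp only [Finset.mem_insert, Finset.mem_erase]
      constructor
      · rintro ⟨h2, h1, (rfl | rfl | hx)⟩ <;> tauto
      · intro hx
        have h1 : x ≠ S := fun h => hS (h ▸ hx)
        have h2 : x ≠ T := fun h => hT (h ▸ hx)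
        tauto
    · intro J hJ
      simp only [Finset.mem_filter, Finset.mem_univ, true_and] at hJ
      obtain ⟨hS, hT⟩ := hJ
      have e1 : insert S (insert T ((J.erase S).erase T)) = J := by
        ext x
        simp only [Finset.mem_insert, Finset.mem_erase]
        constructor
        · rintro (rfl | rfl | ⟨_, _, hx⟩) <;> tauto
        · intro hx
          by_cases h1 : x = S
          · tauto
          · by_cases h2 : x = T <;> tauto
      have e2 : ((((J.erase S).erase T)ᶜ).erase S).erase T = Jᶜ := by
        ext x
        simp only [Finset.mem_erase, Finset.mem_compl]
        constructor
        · rintro ⟨h2, h1, hx⟩ hxJ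
          exact hx ⟨h2, h1, hxJ⟩
        · intro hx
          have h1 : x ≠ S := fun h => hx (h ▸ hS)
          have h2 : x ≠ T := fun h => hx (h ▸ hT)
          exact ⟨h2, h1, fun h => hx h.2.2⟩
      have p1 : ∏ B ∈ J, z B = a * b * ∏ B ∈ (J.erase S).erase T, y B := by
        calc ∏ B ∈ J, z B = ∏ B ∈ insert S (insert T ((J.erase S).erase T)), z B := by rw [e1]
          _ = z S * ∏ B ∈ insert T ((J.erase S).erase T), z B := by
              rw [Finset.prod_insert (by simp [hST])]
          _ = z S * (z T * ∏ B ∈ (J.erase S).erase T, z B) := by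
              rw [Finset.prod_insert (by simp)]
          _ = a * b * ∏ B ∈ (J.erase S).erase T, y B := by
              rw [hzS, hzT, ← mul_assoc]
              congr 1
              refine Finset.prod_congr rfl fun B hB => ?_
              simp only [Finset.mem_erase] at hB
              exact hzB B hB.2.1 hB.1
      have p2 : ∏ B ∈ Jᶜ, (1 - z B) =
          ∏ B ∈ ((((J.erase S).erase T)ᶜ).erase S).erase T, (1 - y B) := by
        rw [e2]
        refine Finset.prod_congr rfl fun B hB => ?_
        simp only [Finset.mem_compl] at hB
        have h1 : B ≠ S := fun h => hB (h ▸ hS)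
        have h2 : B ≠ T := fun h => hB (h ▸ hT)
        rw [hzB B h1 h2]
      rw [e1, p1, p2]
      ring
  have h10 : ∑ J ∈ (Finset.univ.filter (fun J : Finset (Finset α) => S ∈ J)).filter
        (fun J => ¬ T ∈ J),
      f (J.sup id) * ((∏ B ∈ J, z B) * ∏ B ∈ Jᶜ, (1 - z B))
      = ∑ J ∈ Finset.univ.filter (fun J : Finset (Finset α) => S ∉ J ∧ T ∉ J),
      a * (1 - b) * f ((insert S J).sup id) *
        ((∏ B ∈ J, y B) * ∏ B ∈ (Jᶜ.erase S).erase T, (1 - y B)) := by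
    refine Finset.sum_nbij' (fun J => J.erase S) (fun J => insert S J) ?_ ?_ ?_ ?_ ?_
    · intro J hJ
      simp only [Finset.mem_filter, Finset.mem_univ, true_and] at hJ
      simp only [Finset.mem_filter, Finset.mem_univ, true_and, Finset.mem_erase]
      tauto
    · intro J hJ
      simp only [Finset.mem_filter, Finset.mem_univ, true_and] at hJ
      simp only [Finset.mem_filter, Finset.mem_univ, true_and, Finset.mem_insert]
      constructor
      · tauto
      · rintro (rfl | h) <;> tauto
    · intro J hJ
      simp only [Finset.mem_filter, Finset.mem_univ, true_and] at hJ
      exact Finset.insert_erase hJ.1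
    · intro J hJ
      simp only [Finset.mem_filter, Finset.mem_univ, true_and] at hJ
      exact Finset.erase_insert hJ.1
    · intro J hJ
      simp only [Finset.mem_filter, Finset.mem_univ, true_and] at hJ
      obtain ⟨hS, hT⟩ := hJ
      have e1 : insert S (J.erase S) = J := Finset.insert_erase hS
      have e2 : (((J.erase S)ᶜ).erase S).erase T = Jᶜ.erase T := by
        ext x
        simp only [Finset.mem_erase, Finset.mem_compl]
        constructor
        · rintro ⟨h2, h1, hx⟩
          exact ⟨h2, fun hxJ => hx ⟨h1, hxJ⟩⟩
        · rintro ⟨h2, hx⟩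
          have h1 : x ≠ S := fun h => hx (h ▸ hS)
          exact ⟨h2, h1, fun h => hx h.2⟩
      have p1 : ∏ B ∈ J, z B = a * ∏ B ∈ J.erase S, y B := by
        rw [← Finset.mul_prod_erase J z hS, hzS]
        congr 1
        refine Finset.prod_congr rfl fun B hB => ?_
        simp only [Finset.mem_erase] at hB
        exact hzB B hB.1 (fun h => hT (h ▸ hB.2))
      have hTc : T ∈ Jᶜ := Finset.mem_compl.mpr hT
      have p2 : ∏ B ∈ Jᶜ, (1 - z B) =
          (1 - b) * ∏ B ∈ (((J.erase S)ᶜ).erase S).erase T, (1 - y B) := by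
        rw [← Finset.mul_prod_erase Jᶜ _ hTc, hzT, e2]
        congr 1
        refine Finset.prod_congr rfl fun B hB => ?_
        simp only [Finset.mem_erase, Finset.mem_compl] at hB
        have h1 : B ≠ S := fun h => hB.2 (h ▸ hS)
        rw [hzB B h1 hB.1]
      rw [e1, p1, p2]
      ring
  have h01 : ∑ J ∈ (Finset.univ.filter (fun J : Finset (Finset α) => ¬ S ∈ J)).filter
        (fun J => T ∈ J),
      f (J.sup id) * ((∏ B ∈ J, z B) * ∏ B ∈ Jᶜ, (1 - z B))
      = ∑ J ∈ Finset.univ.filter (fun J : Finset (Finset α) => S ∉ J ∧ T ∉ J),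
      (1 - a) * b * f ((insert T J).sup id) *
        ((∏ B ∈ J, y B) * ∏ B ∈ (Jᶜ.erase S).erase T, (1 - y B)) := by
    refine Finset.sum_nbij' (fun J => J.erase T) (fun J => insert T J) ?_ ?_ ?_ ?_ ?_
    · intro J hJ
      simp only [Finset.mem_filter, Finset.mem_univ, true_and] at hJ
      simp only [Finset.mem_filter, Finset.mem_univ, true_and, Finset.mem_erase]
      tauto
    · intro J hJ
      simp only [Finset.mem_filter, Finset.mem_univ, true_and] at hJ
      simp only [Finset.mem_filter, Finset.mem_univ, true_and, Finset.mem_insert]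
      constructor
      · rintro (h | h) <;> tauto
      · tauto
    · intro J hJ
      simp only [Finset.mem_filter, Finset.mem_univ, true_and] at hJ
      exact Finset.insert_erase hJ.2
    · intro J hJ
      simp only [Finset.mem_filter, Finset.mem_univ, true_and] at hJ
      exact Finset.erase_insert hJ.2
    · intro J hJ
      simp only [Finset.mem_filter, Finset.mem_univ, true_and] at hJ
      obtain ⟨hS, hT⟩ := hJ
      have e1 : insert T (J.erase T) = J := Finset.insert_erase hT
      have e2 : (((J.erase T)ᶜ).erase S).erase T = Jᶜ.erase S := by
        ext x
        simp only [Finset.mem_erase, Finset.mem_compl]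
        constructor
        · rintro ⟨h2, h1, hx⟩
          exact ⟨h1, fun hxJ => hx ⟨h2, hxJ⟩⟩
        · rintro ⟨h1, hx⟩
          have h2 : x ≠ T := fun h => hx (h ▸ hT)
          exact ⟨h2, h1, fun h => hx h.2⟩
      have p1 : ∏ B ∈ J, z B = b * ∏ B ∈ J.erase T, y B := by
        rw [← Finset.mul_prod_erase J z hT, hzT]
        congr 1
        refine Finset.prod_congr rfl fun B hB => ?_
        simp only [Finset.mem_erase] at hB
        exact hzB B (fun h => hS (h ▸ hB.2)) hB.1
      have hSc : S ∈ Jᶜ := Finset.mem_compl.mpr hS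
      have p2 : ∏ B ∈ Jᶜ, (1 - z B) =
          (1 - a) * ∏ B ∈ (((J.erase T)ᶜ).erase S).erase T, (1 - y B) := by
        rw [← Finset.mul_prod_erase Jᶜ _ hSc, hzS, e2]
        congr 1
        refine Finset.prod_congr rfl fun B hB => ?_
        simp only [Finset.mem_erase, Finset.mem_compl] at hB
        have h2 : B ≠ T := fun h => hB.2 (h ▸ hT)
        rw [hzB B hB.1 h2]
      rw [e1, p1, p2]
      ring
  have h00 : ∑ J ∈ (Finset.univ.filter (fun J : Finset (Finset α) => ¬ S ∈ J)).filter
        (fun J => ¬ T ∈ J),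
      f (J.sup id) * ((∏ B ∈ J, z B) * ∏ B ∈ Jᶜ, (1 - z B))
      = ∑ J ∈ Finset.univ.filter (fun J : Finset (Finset α) => S ∉ J ∧ T ∉ J),
      (1 - a) * (1 - b) * f (J.sup id) *
        ((∏ B ∈ J, y B) * ∏ B ∈ (Jᶜ.erase S).erase T, (1 - y B)) := by
    rw [Finset.filter_filter]
    refine Finset.sum_congr rfl fun J hJ => ?_
    simp only [Finset.mem_filter, Finset.mem_univ, true_and] at hJ
    obtain ⟨hS, hT⟩ := hJ
    have p1 : ∏ B ∈ J, z B = ∏ B ∈ J, y B := by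
      refine Finset.prod_congr rfl fun B hB => ?_
      exact hzB B (fun h => hS (h ▸ hB)) (fun h => hT (h ▸ hB))
    have hSc : S ∈ Jᶜ := Finset.mem_compl.mpr hS
    have hTc : T ∈ Jᶜ.erase S := Finset.mem_erase.mpr ⟨Ne.symm hST, Finset.mem_compl.mpr hT⟩
    have p2 : ∏ B ∈ Jᶜ, (1 - z B) =
        (1 - a) * ((1 - b) * ∏ B ∈ (Jᶜ.erase S).erase T, (1 - y B)) := by
      rw [← Finset.mul_prod_erase Jᶜ _ hSc, hzS, ← Finset.mul_prod_erase (Jᶜ.erase S) _ hTc,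
        hzT]
      congr 2
      refine Finset.prod_congr rfl fun B hB => ?_
      simp only [Finset.mem_erase, Finset.mem_compl] at hB
      rw [hzB B hB.2.1 hB.1]
    rw [p1, p2]
    ring
  rw [extMulti]
  rw [← Finset.sum_filter_add_sum_filter_not Finset.univ (fun J : Finset (Finset α) => S ∈ J)]
  rw [← Finset.sum_filter_add_sum_filter_not
      (Finset.univ.filter (fun J : Finset (Finset α) => S ∈ J)) (fun J => T ∈ J)]
  rw [← Finset.sum_filter_add_sum_filter_not
      (Finset.univ.filter (fun J : Finset (Finset α) => ¬ S ∈ J)) (fun J => T ∈ J)]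
  rw [h11, h10, h01, h00]
  simp only [add_mul, Finset.sum_add_distrib]
  ring

theorem extMulti_mixed_second_difference_nonpos (f : Finset α → ℝ)
    (hf_nonneg : ∀ S, 0 ≤ f S)
    (hf_submod : ∀ S T : Finset α, f (S ∪ T) + f (S ∩ T) ≤ f S + f T)
    (y : Finset α → ℝ) (hy : ∀ A, 0 ≤ y A ∧ y A ≤ 1)
    (S T : Finset α) (hST : Disjoint S T) :
    extMulti f (Function.update (Function.update y S 1) T 1) +
        extMulti f (Function.update (Function.update y S 0) T 0) ≤
      extMulti f (Function.update (Function.update y S 1) T 0) +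
        extMulti f (Function.update (Function.update y S 0) T 1) := by
  by_cases h : S = T
  · subst h
    rw [Function.update_idem, Function.update_idem, Function.update_idem, Function.update_idem]
    linarith
  · rw [extMulti_expand2 f y S T h 1 1, extMulti_expand2 f y S T h 0 0,
        extMulti_expand2 f y S T h 1 0, extMulti_expand2 f y S T h 0 1,
        ← Finset.sum_add_distrib, ← Finset.sum_add_distrib]
    refine Finset.sum_le_sum fun J hJ => ?_
    have hw0 : 0 ≤ (∏ B ∈ J, y B) * ∏ B ∈ (Jᶜ.erase S).erase T, (1 - y B) := by
      apply mul_nonneg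
      · exact Finset.prod_nonneg fun B _ => (hy B).1
      · exact Finset.prod_nonneg fun B _ => by linarith [(hy B).2]
    have hsub : f ((insert S (insert T J)).sup id) + f (J.sup id) ≤
        f ((insert S J).sup id) + f ((insert T J).sup id) := by
      have h1 := hf_submod ((insert S J).sup id) ((insert T J).sup id)
      have hu : (insert S J).sup id ∪ (insert T J).sup id = (insert S (insert T J)).sup id := by
        simp only [Finset.sup_insert, id]
        ext x
        simp only [Finset.mem_union, Finset.sup_union, Finset.mem_sup, Finset.sup_eq_union]
        tauto
      have hi : (insert S J).sup id ∩ (insert T J).sup id = J.sup id := by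
        simp only [Finset.sup_insert, id]
        ext x
        simp only [Finset.mem_inter, Finset.mem_union, Finset.sup_eq_union]
        have hd := Finset.disjoint_left.mp hST
        tauto
      rw [hu, hi] at h1
      linarith
    nlinarith [mul_le_mul_of_nonneg_right hsub hw0]
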